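/- Under the standing assumptions on φ and φ_λ, suppose in addition that h is sequentially weakly continuous on H. Then for every sequence λ_k → 0⁺ and every sequence x_k converging weakly to x in H, limsup_{k→∞} φ_{λ_k}(x_k) ≤ φ(x). (Theorem 3.1(b), weak convergence case.) -/

import Mathlib

open Filter Topology MeasureTheory

/-- The Moreau envelope of a function `S : H × E → ℝ` (in two arguments) with parameter
`lam`, for the Hilbert norm of the product. -/
noncomputable def moreauEnv2 {H E : Type*} [NormedAddCommGroup H] [InnerProductSpace ℝ H]
    [NormedAddCommGroup E] [InnerProductSpace ℝ E]
    (S : H → E → ℝ) (lam : ℝ) (x : H) (z : E) : ℝ :=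
  ⨅ u : H × E, (S u.1 u.2 + (‖x - u.1‖ ^ 2 + ‖z - u.2‖ ^ 2) / (2 * lam))

/-- Weak (sequential) convergence in a Hilbert space: `⟪x_k, y⟫ → ⟪x₀, y⟫` for every `y`. -/
def WeakSeqTendsto {H : Type*} [NormedAddCommGroup H] [InnerProductSpace ℝ H]
    (x : ℕ → H) (x₀ : H) : Prop :=
  ∀ y : H, Tendsto (fun k => (inner ℝ (x k) y : ℝ)) atTop (𝓝 (inner ℝ x₀ y))


/-- A convex function on a normed space that is dominated by a continuous function
has a (continuous linear) subgradient at every point. -/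
lemma aux_subgrad {W : Type*} [NormedAddCommGroup W] [NormedSpace ℝ W]
    {T U : W → ℝ} (hT : ConvexOn ℝ Set.univ T) (hU : Continuous U) (hTU : ∀ q, T q ≤ U q)
    (q₀ : W) : ∃ L : W →L[ℝ] ℝ, ∀ p, T q₀ + (L p - L q₀) ≤ T p := by
  set epi : Set (W × ℝ) := {p | T p.1 ≤ p.2} with hepidef
  have hepi : Convex ℝ epi := by
    have h1 := hT.convex_epigraph
    have : {p : W × ℝ | p.1 ∈ Set.univ ∧ T p.1 ≤ p.2} = epi := by
      ext p; simp [hepidef]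
    rwa [this] at h1
  have hOsub : {p : W × ℝ | U p.1 < p.2} ⊆ epi := fun p hp => le_trans (hTU p.1) (le_of_lt hp)
  have hOopen : IsOpen {p : W × ℝ | U p.1 < p.2} :=
    isOpen_lt (hU.comp continuous_fst) continuous_snd
  have hA : ((q₀, U q₀ + 1) : W × ℝ) ∈ interior epi :=
    interior_maximal hOsub hOopen (by simp : U (q₀, U q₀ + 1).1 < (q₀, U q₀ + 1).2)
  have hnot : ((q₀, T q₀) : W × ℝ) ∉ interior epi := by
    intro hmem
    rw [mem_interior_iff_mem_nhds, Metric.mem_nhds_iff] at hmem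
    obtain ⟨ε, hε, hball⟩ := hmem
    have hdd : dist (T q₀ - ε/2) (T q₀) = ε/2 := by
      rw [Real.dist_eq]; rw [abs_of_nonpos] <;> linarith
    have hmemb : ((q₀, T q₀ - ε/2) : W × ℝ) ∈ Metric.ball ((q₀, T q₀) : W × ℝ) ε := by
      rw [Metric.mem_ball, Prod.dist_eq, hdd, dist_self, max_eq_right (by linarith : (0:ℝ) ≤ ε/2)]
      linarith
    have h2 := hball hmemb
    simp only [hepidef, Set.mem_setOf_eq] at h2
    linarith
  obtain ⟨f, hf⟩ := geometric_hahn_banach_open_point (hepi.interior) isOpen_interior hnot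
  set β := f ((0 : W), (1 : ℝ)) with hβdef
  have hflin : ∀ (p : W) (t : ℝ), f (p, t) = f (p, 0) + t * β := by
    intro p t
    have h1 : ((p, t) : W × ℝ) = (p, 0) + ((0 : W), t) := by simp
    have h2 : (((0 : W), t) : W × ℝ) = t • (((0 : W), (1:ℝ)) : W × ℝ) := by
      simp [Prod.smul_mk]
    rw [h1, map_add, h2, f.map_smul, smul_eq_mul]
  have hβneg : β < 0 := by
    have h3 := hf _ hA
    rw [hflin q₀ (U q₀ + 1), hflin q₀ (T q₀)] at h3
    nlinarith [hTU q₀]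
  have hkey : ∀ p : W, f (p, T p) ≤ f (q₀, T q₀) := by
    intro p
    have hPmem : ((p, T p) : W × ℝ) ∈ epi := le_refl (T p)
    have hmem : ∀ n : ℕ, (1/(n+1:ℝ)) • ((q₀, U q₀ + 1) : W × ℝ)
        + (1 - 1/(n+1:ℝ)) • ((p, T p) : W × ℝ) ∈ interior epi := by
      intro n
      have hpos : (0:ℝ) < 1/(n+1:ℝ) := by positivity
      have hle : 1/(n+1:ℝ) ≤ 1 := by
        rw [div_le_one (by positivity)]
        have := Nat.cast_nonneg (α := ℝ) n
        linarith
      exact hepi.combo_interior_closure_mem_interior hA (subset_closure hPmem)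
        hpos (by linarith) (by ring)
    have htd : Tendsto (fun n : ℕ => (1/(n+1:ℝ)) • ((q₀, U q₀ + 1) : W × ℝ)
        + (1 - 1/(n+1:ℝ)) • ((p, T p) : W × ℝ)) atTop (𝓝 ((p, T p))) := by
      have h0 := tendsto_one_div_add_atTop_nhds_zero_nat (𝕜 := ℝ)
      have hc : Tendsto (fun n : ℕ => (1:ℝ) - 1/(n+1:ℝ)) atTop (𝓝 (1 - 0)) :=
        (tendsto_const_nhds (x := (1:ℝ))).sub h0
      have h1 := (h0.smul_const ((q₀, U q₀ + 1) : W × ℝ)).add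
        (hc.smul_const ((p, T p) : W × ℝ))
      simpa using h1
    exact le_of_tendsto ((f.continuous.tendsto _).comp htd)
      (Eventually.of_forall fun n => (hf _ (hmem n)).le)
  refine ⟨(-β)⁻¹ • f.comp (ContinuousLinearMap.inl ℝ W ℝ), fun p => ?_⟩
  have hk := hkey p
  rw [hflin p (T p), hflin q₀ (T q₀)] at hk
  have hb : (0:ℝ) < -β := by linarith
  have hbb : (-β)⁻¹ * β = -1 := by
    rw [inv_neg, neg_mul, inv_mul_cancel₀ hβneg.ne]
  simp only [ContinuousLinearMap.smul_apply, ContinuousLinearMap.coe_comp',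
    Function.comp_apply, ContinuousLinearMap.inl_apply, smul_eq_mul]
  have h2 : f (p,0) - f (q₀,0) ≤ (T q₀ - T p) * β := by linarith
  have h3 : (-β)⁻¹ * (f (p,0) - f (q₀,0)) ≤ (-β)⁻¹ * ((T q₀ - T p) * β) :=
    mul_le_mul_of_nonneg_left h2 (le_of_lt (inv_pos.mpr hb))
  have h4 : (-β)⁻¹ * ((T q₀ - T p) * β) = T p - T q₀ := by
    rw [show (T q₀ - T p) * β = β * (T q₀ - T p) by ring, ← mul_assoc, hbb]; ring
  rw [h4] at h3
  linarith [h3]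

/-- Norm bound on a weak-* compact set of functionals. -/
lemma aux_dualbound {Y : Type*} [NormedAddCommGroup Y] [NormedSpace ℝ Y] [CompleteSpace Y]
    {C : Set (WeakDual ℝ Y)} (hC : IsCompact C) :
    ∃ M : ℝ, ∀ v ∈ C, ∀ y : Y, |v y| ≤ M * ‖y‖ := by
  have hpt : ∀ y : Y, ∃ Cb, ∀ v : C, ‖WeakDual.toStrongDual (v : WeakDual ℝ Y) y‖ ≤ Cb := by
    intro y
    have hcont : Continuous fun v : WeakDual ℝ Y => ‖v y‖ := (WeakDual.eval_continuous y).norm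
    obtain ⟨Cb, hCb⟩ := (hC.image hcont).bddAbove
    exact ⟨Cb, fun v => hCb ⟨(v : WeakDual ℝ Y), v.2, rfl⟩⟩
  obtain ⟨M, hM⟩ := banach_steinhaus
    (g := fun v : C => (WeakDual.toStrongDual (v : WeakDual ℝ Y) : Y →L[ℝ] ℝ)) hpt
  refine ⟨M, fun v hv y => ?_⟩
  have h1 := (WeakDual.toStrongDual (v : WeakDual ℝ Y)).le_opNorm y
  have h2 : ‖WeakDual.toStrongDual v y‖ ≤ M * ‖y‖ :=
    le_trans h1 (mul_le_mul_of_nonneg_right (hM ⟨v, hv⟩) (norm_nonneg y))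
  simpa [Real.norm_eq_abs, WeakDual.toStrongDual_apply] using h2

lemma aux_le_of_frequently_le {c b : ℝ} {F : ℕ → ℝ} (hfr : ∃ᶠ k in atTop, c ≤ F k)
    (hF : Tendsto F atTop (𝓝 b)) : c ≤ b := by
  by_contra hcb
  push_neg at hcb
  have hev : ∀ᶠ k in atTop, F k < c := hF.eventually_lt_const hcb
  obtain ⟨k, hk1, hk2⟩ := (hfr.and_eventually hev).exists
  linarith

lemma aux_quad {c a lam' : ℝ} (hl : 0 < lam') :
    c * a - c^2 * lam' / 2 ≤ a^2 / (2 * lam') := by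
  rw [le_div_iff₀ (by positivity)]
  nlinarith [sq_nonneg (a - c * lam')]
/-- Theorem 3.1(b), weak convergence case: if in addition `h` is sequentially weakly
continuous, then for any `λ_k → 0⁺` and `x_k ⇀ x` weakly, `limsup_k φ_{λ_k}(x_k) ≤ φ(x)`. -/
theorem stmt6
    {H Y : Type*} [NormedAddCommGroup H] [InnerProductSpace ℝ H] [CompleteSpace H]
    [SecondCountableTopology H]
    [NormedAddCommGroup Y] [NormedSpace ℝ Y] [CompleteSpace Y] {m : ℕ}
    {Ω : Type*} [MeasurableSpace Ω] (P : Measure Ω) [IsProbabilityMeasure P]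
    (ξ : Ω → EuclideanSpace ℝ (Fin m)) (hξ : Measurable ξ)
    (hlaw : P.map ξ ≪ volume)
    (K : Set Y) (hKne : K.Nonempty) (hKcl : IsClosed K) (hKconv : Convex ℝ K)
    (hKcone : ∀ c : ℝ, 0 ≤ c → ∀ y ∈ K, c • y ∈ K)
    (C : Set (WeakDual ℝ Y)) (hCne : C.Nonempty) (hCconv : Convex ℝ C) (hCcpt : IsCompact C)
    (hCgen : closure {w : WeakDual ℝ Y | ∃ c : ℝ, 0 ≤ c ∧ ∃ v ∈ C, w = c • v}
      = {w : WeakDual ℝ Y | ∀ y ∈ K, 0 ≤ w y})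
    (Φ : H → EuclideanSpace ℝ (Fin m) → Y)
    (hΦ : Continuous fun q : H × EuclideanSpace ℝ (Fin m) => Φ q.1 q.2)
    (h : H → ℝ) (hconv : ConvexOn ℝ Set.univ h) (hC1 : ContDiff ℝ 1 h)
    (hscal : ∀ v ∈ C, ConvexOn ℝ Set.univ
      (fun q : H × EuclideanSpace ℝ (Fin m) => v (Φ q.1 q.2) + h q.1))
    (S : H → EuclideanSpace ℝ (Fin m) → ℝ)
    (hS : ∀ x z, S x z = ⨆ v : C, ((v : WeakDual ℝ Y) (Φ x z) + h x))
    (φ : H → ℝ)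
    (hφ : ∀ x, φ x = (P {ω | S x (ξ ω) ≤ h x}).toReal)
    (φl : ℝ → H → ℝ)
    (hφl : ∀ lam x, φl lam x = (P {ω | moreauEnv2 S lam x (ξ ω) ≤ h x}).toReal)
    (hwk : ∀ (x : ℕ → H) (x₀ : H), WeakSeqTendsto x x₀ →
      Tendsto (fun k => h (x k)) atTop (𝓝 (h x₀))) :
    ∀ lam : ℕ → ℝ, (∀ k, 0 < lam k) → Tendsto lam atTop (𝓝 0) →
    ∀ (x : ℕ → H) (x₀ : H), WeakSeqTendsto x x₀ →
      Filter.limsup (fun k => φl (lam k) (x k)) atTop ≤ φ x₀ := by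
  intro lam hlampos hlam0 x x₀ hx
  haveI hCne' : Nonempty C := hCne.to_subtype
  haveI : Nonempty (H × EuclideanSpace ℝ (Fin m)) := ⟨(0, 0)⟩
  obtain ⟨MC, hMC⟩ := aux_dualbound hCcpt
  -- basic bounds on S
  have hterm : ∀ (x' : H) (z : EuclideanSpace ℝ (Fin m)) (v : C),
      ((v : WeakDual ℝ Y) (Φ x' z) + h x') ≤ MC * ‖Φ x' z‖ + h x' := by
    intro x' z v
    have h1 := hMC (v : WeakDual ℝ Y) v.2 (Φ x' z)
    have h2 : (v : WeakDual ℝ Y) (Φ x' z) ≤ MC * ‖Φ x' z‖ := le_trans (le_abs_self _) h1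
    linarith
  have hbdd1 : ∀ (x' : H) (z : EuclideanSpace ℝ (Fin m)),
      BddAbove (Set.range fun v : C => ((v : WeakDual ℝ Y) (Φ x' z) + h x')) := by
    intro x' z
    refine ⟨MC * ‖Φ x' z‖ + h x', ?_⟩
    rintro r ⟨v, rfl⟩
    exact hterm x' z v
  have hSU : ∀ (x' : H) (z : EuclideanSpace ℝ (Fin m)), S x' z ≤ MC * ‖Φ x' z‖ + h x' := by
    intro x' z; rw [hS]
    exact ciSup_le (hterm x' z)
  have hge : ∀ (x' : H) (z : EuclideanSpace ℝ (Fin m)) (v : WeakDual ℝ Y), v ∈ C →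
      v (Φ x' z) + h x' ≤ S x' z := by
    intro x' z v hv
    rw [hS]
    exact le_ciSup (hbdd1 x' z) (⟨v, hv⟩ : C)
  -- convexity of S as a function of the pair
  have hTconv : ConvexOn ℝ Set.univ (fun q : H × EuclideanSpace ℝ (Fin m) => S q.1 q.2) := by
    refine ⟨convex_univ, ?_⟩
    intro p _ q _ a b ha hb hab
    simp only
    rw [hS]
    refine ciSup_le fun v => ?_
    have h1 := (hscal (v : WeakDual ℝ Y) v.2).2 (Set.mem_univ p) (Set.mem_univ q) ha hb hab
    refine le_trans h1 ?_
    have h2 : (v : WeakDual ℝ Y) (Φ p.1 p.2) + h p.1 ≤ S p.1 p.2 := hge p.1 p.2 _ v.2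
    have h3 : (v : WeakDual ℝ Y) (Φ q.1 q.2) + h q.1 ≤ S q.1 q.2 := hge q.1 q.2 _ v.2
    simp only [smul_eq_mul]
    have h4 := mul_le_mul_of_nonneg_left h2 ha
    have h5 := mul_le_mul_of_nonneg_left h3 hb
    linarith
  -- subgradients of S
  have hUcont : Continuous (fun q : H × EuclideanSpace ℝ (Fin m) => MC * ‖Φ q.1 q.2‖ + h q.1) :=
    (continuous_const.mul hΦ.norm).add (hC1.continuous.comp continuous_fst)
  have hsub : ∀ (x' : H) (z : EuclideanSpace ℝ (Fin m)),
      ∃ (g₁ : H) (g₂ : EuclideanSpace ℝ (Fin m)),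
        ∀ (a : H) (b : EuclideanSpace ℝ (Fin m)),
          S x' z + ((inner ℝ g₁ a : ℝ) - (inner ℝ g₁ x' : ℝ))
            + ((inner ℝ g₂ b : ℝ) - (inner ℝ g₂ z : ℝ)) ≤ S a b := by
    intro x' z
    obtain ⟨L, hL⟩ := aux_subgrad hTconv hUcont (fun q => hSU q.1 q.2) (x', z)
    refine ⟨(InnerProductSpace.toDual ℝ H).symm
        (L.comp (ContinuousLinearMap.inl ℝ H (EuclideanSpace ℝ (Fin m)))),
      (InnerProductSpace.toDual ℝ (EuclideanSpace ℝ (Fin m))).symm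
        (L.comp (ContinuousLinearMap.inr ℝ H (EuclideanSpace ℝ (Fin m)))), fun a b => ?_⟩
    have hsplit : ∀ (a : H) (b : EuclideanSpace ℝ (Fin m)), L (a, b) = L (a, 0) + L (0, b) := by
      intro a b
      have : ((a, b) : H × EuclideanSpace ℝ (Fin m)) = (a, 0) + (0, b) := by simp
      rw [this, map_add]
    have hg1 : ∀ a : H, (inner ℝ ((InnerProductSpace.toDual ℝ H).symm
        (L.comp (ContinuousLinearMap.inl ℝ H (EuclideanSpace ℝ (Fin m))))) a : ℝ) = L (a, 0) := by
      intro a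
      rw [InnerProductSpace.toDual_symm_apply]
      rfl
    have hg2 : ∀ b : EuclideanSpace ℝ (Fin m),
        (inner ℝ ((InnerProductSpace.toDual ℝ (EuclideanSpace ℝ (Fin m))).symm
        (L.comp (ContinuousLinearMap.inr ℝ H (EuclideanSpace ℝ (Fin m))))) b : ℝ) = L (0, b) := by
      intro b
      rw [InnerProductSpace.toDual_symm_apply]
      rfl
    have hk := hL (a, b)
    rw [hsplit a b, hsplit x' z] at hk
    rw [hg1 a, hg1 x', hg2 b, hg2 z]
    linarith [hk]
  -- the Moreau infimand is bounded below
  have hbddB : ∀ (lam' : ℝ), 0 < lam' → ∀ (x' : H) (z : EuclideanSpace ℝ (Fin m)),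
      BddBelow (Set.range fun u : H × EuclideanSpace ℝ (Fin m) =>
        S u.1 u.2 + (‖x' - u.1‖ ^ 2 + ‖z - u.2‖ ^ 2) / (2 * lam')) := by
    intro lam' hl x' z
    obtain ⟨g₁, g₂, hg⟩ := hsub x' z
    refine ⟨S x' z - (‖g₁‖ ^ 2 * lam' / 2 + ‖g₂‖ ^ 2 * lam' / 2), ?_⟩
    rintro r ⟨u, rfl⟩
    dsimp only
    have h1 := hg u.1 u.2
    have hi1 : (inner ℝ g₁ u.1 : ℝ) - (inner ℝ g₁ x' : ℝ) = (inner ℝ g₁ (u.1 - x') : ℝ) := by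
      rw [inner_sub_right]
    have hi2 : (inner ℝ g₂ u.2 : ℝ) - (inner ℝ g₂ z : ℝ) = (inner ℝ g₂ (u.2 - z) : ℝ) := by
      rw [inner_sub_right]
    have hb1 : -(‖g₁‖ * ‖u.1 - x'‖) ≤ (inner ℝ g₁ (u.1 - x') : ℝ) :=
      le_trans (neg_le_neg (abs_real_inner_le_norm g₁ (u.1 - x'))) (neg_abs_le _)
    have hb2 : -(‖g₂‖ * ‖u.2 - z‖) ≤ (inner ℝ g₂ (u.2 - z) : ℝ) :=
      le_trans (neg_le_neg (abs_real_inner_le_norm g₂ (u.2 - z))) (neg_abs_le _)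
    have hq1 : ‖g₁‖ * ‖u.1 - x'‖ - ‖g₁‖ ^ 2 * lam' / 2 ≤ ‖u.1 - x'‖ ^ 2 / (2 * lam') :=
      aux_quad hl
    have hq2 : ‖g₂‖ * ‖u.2 - z‖ - ‖g₂‖ ^ 2 * lam' / 2 ≤ ‖u.2 - z‖ ^ 2 / (2 * lam') :=
      aux_quad hl
    have hn1 : ‖x' - u.1‖ = ‖u.1 - x'‖ := norm_sub_rev _ _
    have hn2 : ‖z - u.2‖ = ‖u.2 - z‖ := norm_sub_rev _ _
    have hdiv : (‖x' - u.1‖ ^ 2 + ‖z - u.2‖ ^ 2) / (2 * lam')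
        = ‖u.1 - x'‖ ^ 2 / (2 * lam') + ‖u.2 - z‖ ^ 2 / (2 * lam') := by
      rw [hn1, hn2, add_div]
    rw [hdiv]
    rw [hi1, hi2] at h1
    linarith
  -- sublevel sets of the Moreau envelope are measurable
  have hopenM : ∀ (lam' : ℝ), 0 < lam' → ∀ (x' : H) (c : ℝ),
      IsOpen {z : EuclideanSpace ℝ (Fin m) | moreauEnv2 S lam' x' z < c} := by
    intro lam' hl x' c
    rw [isOpen_iff_mem_nhds]
    intro z hz
    simp only [Set.mem_setOf_eq, moreauEnv2] at hz
    obtain ⟨u, hu⟩ := exists_lt_of_ciInf_lt hz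
    have hcont : Continuous fun z' : EuclideanSpace ℝ (Fin m) =>
        S u.1 u.2 + (‖x' - u.1‖ ^ 2 + ‖z' - u.2‖ ^ 2) / (2 * lam') := by
      fun_prop
    have hev : ∀ᶠ z' in 𝓝 z,
        S u.1 u.2 + (‖x' - u.1‖ ^ 2 + ‖z' - u.2‖ ^ 2) / (2 * lam') < c :=
      (hcont.tendsto z).eventually_lt_const hu
    filter_upwards [hev] with z' hz'
    exact lt_of_le_of_lt (ciInf_le (hbddB lam' hl x' z') u) hz'
  have hZmeas : ∀ (lam' : ℝ), 0 < lam' → ∀ (x' : H) (c : ℝ),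
      MeasurableSet {z : EuclideanSpace ℝ (Fin m) | moreauEnv2 S lam' x' z ≤ c} := by
    intro lam' hl x' c
    have heq : {z : EuclideanSpace ℝ (Fin m) | moreauEnv2 S lam' x' z ≤ c}
        = ⋂ n : ℕ, {z | moreauEnv2 S lam' x' z < c + 1 / (n + 1)} := by
      ext z
      simp only [Set.mem_setOf_eq, Set.mem_iInter]
      constructor
      · intro hz n
        have : (0:ℝ) < 1 / (n + 1 : ℝ) := by positivity
        linarith
      · intro hz
        by_contra hcz
        push_neg at hcz
        obtain ⟨n, hn⟩ := exists_nat_one_div_lt (by linarith : (0:ℝ) < moreauEnv2 S lam' x' z - c)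
        have := hz n
        linarith
    rw [heq]
    exact MeasurableSet.iInter fun n => (hopenM lam' hl x' _).measurableSet
  -- the sublevel set of S x₀ is closed
  have hclS : IsClosed {z : EuclideanSpace ℝ (Fin m) | S x₀ z ≤ h x₀} := by
    have heq : {z : EuclideanSpace ℝ (Fin m) | S x₀ z ≤ h x₀}
        = ⋂ v : C, {z | (v : WeakDual ℝ Y) (Φ x₀ z) + h x₀ ≤ h x₀} := by
      ext z
      simp only [Set.mem_setOf_eq, Set.mem_iInter]
      constructor
      · intro hz v
        exact le_trans (hge x₀ z _ v.2) hz
      · intro hz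
        rw [hS]
        exact ciSup_le hz
    rw [heq]
    refine isClosed_iInter fun v => ?_
    have hc1 : Continuous fun z : EuclideanSpace ℝ (Fin m) =>
        WeakDual.toStrongDual (v : WeakDual ℝ Y) (Φ x₀ z) :=
      (WeakDual.toStrongDual (v : WeakDual ℝ Y)).continuous.comp
        (hΦ.comp (Continuous.prodMk_right x₀))
    simp only [WeakDual.toStrongDual_apply] at hc1
    exact isClosed_le (hc1.add continuous_const) continuous_const
  -- pointwise limsup inclusion
  have hpt : ∀ z : EuclideanSpace ℝ (Fin m),
      (∃ᶠ k in atTop, moreauEnv2 S (lam k) (x k) z ≤ h (x k)) → S x₀ z ≤ h x₀ := by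
    intro z hfreq
    obtain ⟨g₁, g₂, hg⟩ := hsub x₀ z
    have hstep : ∀ k, moreauEnv2 S (lam k) (x k) z ≤ h (x k) →
        S x₀ z ≤ h (x k) + lam k + |(inner ℝ (x k) g₁ : ℝ) - (inner ℝ x₀ g₁ : ℝ)|
          + (‖g₁‖ ^ 2 * lam k / 2 + ‖g₂‖ ^ 2 * lam k / 2) := by
      intro k hk
      have hlt : moreauEnv2 S (lam k) (x k) z < h (x k) + lam k :=
        lt_of_le_of_lt hk (by linarith [hlampos k])
      simp only [moreauEnv2] at hlt
      obtain ⟨u, hu⟩ := exists_lt_of_ciInf_lt hlt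
      have h1 := hg u.1 u.2
      have hi1 : (inner ℝ g₁ u.1 : ℝ) - (inner ℝ g₁ x₀ : ℝ)
          = (inner ℝ g₁ (u.1 - x k) : ℝ) + ((inner ℝ g₁ (x k) : ℝ) - (inner ℝ g₁ x₀ : ℝ)) := by
        rw [inner_sub_right]; ring
      have hi2 : (inner ℝ g₂ u.2 : ℝ) - (inner ℝ g₂ z : ℝ) = (inner ℝ g₂ (u.2 - z) : ℝ) := by
        rw [inner_sub_right]
      have hb1 : -(‖g₁‖ * ‖u.1 - x k‖) ≤ (inner ℝ g₁ (u.1 - x k) : ℝ) :=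
        le_trans (neg_le_neg (abs_real_inner_le_norm g₁ (u.1 - x k))) (neg_abs_le _)
      have hb2 : -(‖g₂‖ * ‖u.2 - z‖) ≤ (inner ℝ g₂ (u.2 - z) : ℝ) :=
        le_trans (neg_le_neg (abs_real_inner_le_norm g₂ (u.2 - z))) (neg_abs_le _)
      have hb3 : -|(inner ℝ (x k) g₁ : ℝ) - (inner ℝ x₀ g₁ : ℝ)|
          ≤ (inner ℝ g₁ (x k) : ℝ) - (inner ℝ g₁ x₀ : ℝ) := by
        rw [real_inner_comm g₁ (x k), real_inner_comm g₁ x₀]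
        exact neg_abs_le _
      have hq1 : ‖g₁‖ * ‖u.1 - x k‖ - ‖g₁‖ ^ 2 * lam k / 2 ≤ ‖u.1 - x k‖ ^ 2 / (2 * lam k) :=
        aux_quad (hlampos k)
      have hq2 : ‖g₂‖ * ‖u.2 - z‖ - ‖g₂‖ ^ 2 * lam k / 2 ≤ ‖u.2 - z‖ ^ 2 / (2 * lam k) :=
        aux_quad (hlampos k)
      have hn1 : ‖x k - u.1‖ = ‖u.1 - x k‖ := norm_sub_rev _ _
      have hn2 : ‖z - u.2‖ = ‖u.2 - z‖ := norm_sub_rev _ _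
      have hdiv : (‖x k - u.1‖ ^ 2 + ‖z - u.2‖ ^ 2) / (2 * lam k)
          = ‖u.1 - x k‖ ^ 2 / (2 * lam k) + ‖u.2 - z‖ ^ 2 / (2 * lam k) := by
        rw [hn1, hn2, add_div]
      rw [hdiv] at hu
      rw [hi1, hi2] at h1
      linarith
    have hF : Tendsto (fun k => h (x k) + lam k + |(inner ℝ (x k) g₁ : ℝ) - (inner ℝ x₀ g₁ : ℝ)|
        + (‖g₁‖ ^ 2 * lam k / 2 + ‖g₂‖ ^ 2 * lam k / 2)) atTop (𝓝 (h x₀)) := by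
      have h1 := hwk x x₀ hx
      have h2 : Tendsto (fun k => |(inner ℝ (x k) g₁ : ℝ) - (inner ℝ x₀ g₁ : ℝ)|) atTop (𝓝 0) := by
        have := ((hx g₁).sub (tendsto_const_nhds (x := (inner ℝ x₀ g₁ : ℝ)))).abs
        simpa using this
      have h3 : Tendsto (fun k => ‖g₁‖ ^ 2 * lam k / 2 + ‖g₂‖ ^ 2 * lam k / 2) atTop (𝓝 0) := by
        have := ((hlam0.const_mul (‖g₁‖ ^ 2)).div_const 2).add
          ((hlam0.const_mul (‖g₂‖ ^ 2)).div_const 2)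
        simpa using this
      have := ((h1.add hlam0).add h2).add h3
      simpa using this
    exact aux_le_of_frequently_le (hfreq.mono fun k hk => hstep k hk) hF
  -- the measure-theoretic part
  set A : ℕ → Set Ω := fun k => {ω | moreauEnv2 S (lam k) (x k) (ξ ω) ≤ h (x k)} with hAdef
  set Ainf : Set Ω := {ω | S x₀ (ξ ω) ≤ h x₀} with hAinfdef
  have hAmeas : ∀ k, MeasurableSet (A k) := fun k =>
    hξ (hZmeas (lam k) (hlampos k) (x k) (h (x k)))
  set B : ℕ → Set Ω := fun N => ⋃ n, ⋃ (_ : N ≤ n), A n with hBdef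
  have hBmeas : ∀ N, MeasurableSet (B N) := fun N =>
    MeasurableSet.iUnion fun n => MeasurableSet.iUnion fun _ => hAmeas n
  have hBanti : Antitone B := by
    intro N N' hNN'
    simp only [hBdef]
    refine Set.iUnion₂_subset fun n hn ω hω => ?_
    exact Set.mem_iUnion.mpr ⟨n, Set.mem_iUnion.mpr ⟨le_trans hNN' hn, hω⟩⟩
  have htend : Tendsto (P ∘ B) atTop (𝓝 (P (⋂ N, B N))) :=
    tendsto_measure_iInter_atTop (fun N => (hBmeas N).nullMeasurableSet) hBanti
      ⟨0, measure_ne_top P _⟩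
  have hsubA : (⋂ N, B N) ⊆ Ainf := by
    intro ω hω
    have hfr : ∃ᶠ k in atTop, moreauEnv2 S (lam k) (x k) (ξ ω) ≤ h (x k) := by
      rw [frequently_atTop]
      intro N
      have h1 := Set.mem_iInter.mp hω N
      simp only [hBdef, Set.mem_iUnion] at h1
      obtain ⟨n, hn, hmem⟩ := h1
      exact ⟨n, hn, hmem⟩
    exact hpt (ξ ω) hfr
  have hrw : (fun k => φl (lam k) (x k)) = fun k => (P (A k)).toReal :=
    funext fun k => hφl (lam k) (x k)
  rw [hrw, hφ]
  have hbd : IsBoundedUnder (· ≥ ·) atTop (fun k => (P (A k)).toReal) :=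
    isBoundedUnder_of ⟨0, fun k => ENNReal.toReal_nonneg⟩
  have hcb : IsCoboundedUnder (· ≤ ·) atTop (fun k => (P (A k)).toReal) :=
    hbd.isCoboundedUnder_le
  have h1 : ∀ N, Filter.limsup (fun k => (P (A k)).toReal) atTop ≤ (P (B N)).toReal := by
    intro N
    refine limsup_le_of_le hcb ?_
    rw [eventually_atTop]
    refine ⟨N, fun k hk => ENNReal.toReal_mono (measure_ne_top P _) (measure_mono ?_)⟩
    simp only [hBdef]
    intro ω hω
    exact Set.mem_iUnion.mpr ⟨k, Set.mem_iUnion.mpr ⟨hk, hω⟩⟩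
  have htendR : Tendsto (fun N => (P (B N)).toReal) atTop (𝓝 (P (⋂ N, B N)).toReal) :=
    (ENNReal.tendsto_toReal (measure_ne_top P _)).comp htend
  have h2 : Filter.limsup (fun k => (P (A k)).toReal) atTop ≤ (P (⋂ N, B N)).toReal :=
    ge_of_tendsto htendR (Eventually.of_forall h1)
  exact h2.trans (ENNReal.toReal_mono (measure_ne_top P _) (measure_mono hsubA))
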